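/- Let X and Θ be bounded subsets of ℝ^N with |⟨x, θ⟩| ≤ C for all x ∈ X, θ ∈ Θ, and suppose dim(span(X)) = d. Suppose x¹,...,x^K ∈ X and θ¹,...,θ^K ∈ Θ satisfy, for every k ∈ [K], the conditions Σ_{t<k} ⟨θ^k, x^t⟩² ≤ ε² and |⟨θ^k, x^k⟩| ≥ ε. Then K = O(d·log(dC/ε)); concretely, (3/2)^K ≤ (K d² C²/ε² + 1)^d. -/

import Mathlib

set_option maxHeartbeats 1000000
open Matrix Finset

lemma cs_bilin {n : ℕ} (V : Matrix (Fin n) (Fin n) ℝ)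
    (hsym : ∀ a b : Fin n → ℝ, a ⬝ᵥ (V *ᵥ b) = b ⬝ᵥ (V *ᵥ a))
    (hpsd : ∀ v : Fin n → ℝ, 0 ≤ v ⬝ᵥ (V *ᵥ v)) (w u : Fin n → ℝ) :
    (w ⬝ᵥ (V *ᵥ u))^2 ≤ (w ⬝ᵥ (V *ᵥ w)) * (u ⬝ᵥ (V *ᵥ u)) := by
  have key : ∀ t : ℝ, 0 ≤ (w ⬝ᵥ (V *ᵥ w))*(t*t) + (-2*(w ⬝ᵥ (V *ᵥ u)))*t + (u ⬝ᵥ (V *ᵥ u)) := by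
    intro t
    have h := hpsd (t • w - u)
    have expand : (t • w - u) ⬝ᵥ (V *ᵥ (t • w - u))
        = (w ⬝ᵥ (V *ᵥ w))*(t*t) + (-2*(w ⬝ᵥ (V *ᵥ u)))*t + (u ⬝ᵥ (V *ᵥ u)) := by
      rw [mulVec_sub, mulVec_smul, sub_dotProduct, smul_dotProduct,
        dotProduct_sub, dotProduct_sub, dotProduct_smul, dotProduct_smul, hsym u w]
      simp only [smul_eq_mul]; ring
    rwa [expand] at h
  have hd := discrim_le_zero key
  rw [discrim] at hd
  nlinarith [hd]

lemma cs_pd {n : ℕ} {V : Matrix (Fin n) (Fin n) ℝ} (hV : V.PosDef)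
    (w c : Fin n → ℝ) : (w ⬝ᵥ c)^2 ≤ (w ⬝ᵥ (V *ᵥ w)) * (c ⬝ᵥ (V⁻¹ *ᵥ c)) := by
  have hVt : Vᵀ = V := by simpa using hV.isHermitian.eq
  have hsym : ∀ a b : Fin n → ℝ, a ⬝ᵥ (V *ᵥ b) = b ⬝ᵥ (V *ᵥ a) := by
    intro a b
    rw [dotProduct_mulVec]
    nth_rewrite 1 [← hVt]
    rw [vecMul_transpose, dotProduct_comm]
  have hpsd : ∀ v : Fin n → ℝ, 0 ≤ v ⬝ᵥ (V *ᵥ v) := by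
    intro v
    rcases eq_or_ne v 0 with h | h
    · simp [h]
    · exact le_of_lt (by simpa using hV.dotProduct_mulVec_pos h)
  have hVu : V *ᵥ (V⁻¹ *ᵥ c) = c := by
    rw [mulVec_mulVec, Matrix.mul_nonsing_inv _ hV.det_pos.ne'.isUnit, one_mulVec]
  have hq : c ⬝ᵥ (V⁻¹ *ᵥ c) = (V⁻¹ *ᵥ c) ⬝ᵥ (V *ᵥ (V⁻¹ *ᵥ c)) := by
    nth_rewrite 1 [← hVu]
    rw [dotProduct_comm, hsym]
  have hwc : w ⬝ᵥ c = w ⬝ᵥ (V *ᵥ (V⁻¹ *ᵥ c)) := by rw [hVu]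
  rw [hq, hwc]
  exact cs_bilin V hsym hpsd w _

-- determinant step
lemma det_step {n : ℕ} {V : Matrix (Fin n) (Fin n) ℝ} (hV : V.PosDef) (c : Fin n → ℝ) :
    (V + vecMulVec c c).det = V.det * (1 + c ⬝ᵥ (V⁻¹ *ᵥ c)) := by
  rw [vecMulVec_eq Unit, Matrix.det_add_replicateCol_mul_replicateRow hV.det_pos.ne'.isUnit]
  congr 1
  rw [Matrix.mul_assoc, ← replicateCol_mulVec, det_unique]
  simp [replicateRow_mul_replicateCol_apply]

-- positive definiteness
lemma posdef_V {n : ℕ} {L : ℝ} (hL : 0 < L) {ι : Type*} [Fintype ι] (s : Finset ι)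
    (c : ι → Fin n → ℝ) :
    (L • (1 : Matrix (Fin n) (Fin n) ℝ) + ∑ t ∈ s, vecMulVec (c t) (c t)).PosDef := by
  have h1 : (L • (1 : Matrix (Fin n) (Fin n) ℝ)).PosDef := by
    rw [smul_one_eq_diagonal]
    exact Matrix.PosDef.diagonal (fun _ => hL)
  have h2 : (∑ t ∈ s, vecMulVec (c t) (c t)).PosSemidef := by
    apply Finset.sum_induction _ _ (fun A B hA hB => hA.add hB) Matrix.PosSemidef.zero
    intro t _
    have : vecMulVec (c t) (c t) = (replicateRow Unit (c t))ᴴ * (replicateRow Unit (c t)) := by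
      rw [vecMulVec_eq Unit, conjTranspose_replicateRow, star_trivial]
    rw [this]
    exact Matrix.posSemidef_conjTranspose_mul_self _
  exact h1.add_posSemidef h2

lemma dot_vecMulVec {n : ℕ} (u v w : Fin n → ℝ) :
    w ⬝ᵥ ((vecMulVec u v) *ᵥ w) = (w ⬝ᵥ u) * (v ⬝ᵥ w) := by
  simp only [vecMulVec_apply, mulVec, dotProduct, Finset.mul_sum, Finset.sum_mul]
  rw [Finset.sum_comm]
  apply Finset.sum_congr rfl; intro i _
  apply Finset.sum_congr rfl; intro j _
  ring

lemma quad_sum {n : ℕ} {ι : Type*} (s : Finset ι) (c : ι → Fin n → ℝ) (w : Fin n → ℝ) :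
    w ⬝ᵥ ((∑ t ∈ s, vecMulVec (c t) (c t)) *ᵥ w) = ∑ t ∈ s, (w ⬝ᵥ c t)^2 := by
  classical
  induction s using Finset.induction with
  | empty => simp [Matrix.zero_mulVec]
  | insert _ _ h ih =>
    rw [Finset.sum_insert h, Finset.sum_insert h, add_mulVec, dotProduct_add, ih,
      dot_vecMulVec, dotProduct_comm]
    ring

-- quadratic form of V
lemma quadform_V {n : ℕ} (L : ℝ) {ι : Type*} (s : Finset ι)
    (c : ι → Fin n → ℝ) (w : Fin n → ℝ) :
    w ⬝ᵥ ((L • (1 : Matrix (Fin n) (Fin n) ℝ) + ∑ t ∈ s, vecMulVec (c t) (c t)) *ᵥ w)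
      = L * (∑ i, (w i)^2) + ∑ t ∈ s, (w ⬝ᵥ c t)^2 := by
  rw [add_mulVec, dotProduct_add, quad_sum]
  congr 1
  rw [smul_mulVec, one_mulVec, dotProduct_smul]
  simp [dotProduct, pow_two, Finset.mul_sum]

-- trace of V
lemma trace_V {n : ℕ} (L : ℝ) {ι : Type*} (s : Finset ι)
    (c : ι → Fin n → ℝ) :
    (L • (1 : Matrix (Fin n) (Fin n) ℝ) + ∑ t ∈ s, vecMulVec (c t) (c t)).trace
      = L * n + ∑ t ∈ s, ∑ i, (c t i)^2 := by
  rw [trace_add, trace_smul, trace_one, trace_sum]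
  simp only [Matrix.trace, Matrix.diag, vecMulVec_apply]
  simp [pow_two, smul_eq_mul, mul_comm]

lemma trace_eq_sum_eigs {n : ℕ} {A : Matrix (Fin n) (Fin n) ℝ} (hA : A.IsHermitian) :
    A.trace = ∑ i, hA.eigenvalues i := by
  nth_rewrite 1 [hA.spectral_theorem]
  rw [Unitary.conjStarAlgAut_apply, Matrix.trace_mul_comm, ← Matrix.mul_assoc,
    (Matrix.mem_unitaryGroup_iff').mp (Matrix.IsHermitian.eigenvectorUnitary hA).2, Matrix.one_mul,
    Matrix.trace_diagonal]
  simp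

lemma det_le_trace_pow {n : ℕ} (hn : 0 < n) {A : Matrix (Fin n) (Fin n) ℝ}
    (hA : A.PosSemidef) : A.det ≤ (A.trace / n)^n := by
  have hherm := hA.isHermitian
  have hev : ∀ i, 0 ≤ hherm.eigenvalues i := fun i => hA.eigenvalues_nonneg i
  have hdet : A.det = ∏ i, hherm.eigenvalues i := by
    have := hherm.det_eq_prod_eigenvalues
    simpa using this
  have htr : A.trace = ∑ i, hherm.eigenvalues i := trace_eq_sum_eigs hherm
  rw [hdet, htr]
  -- AM-GM
  have hw : ∀ i ∈ (Finset.univ : Finset (Fin n)), (0:ℝ) ≤ 1/n := fun _ _ => by positivity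
  have hw1 : ∑ _i ∈ (Finset.univ : Finset (Fin n)), (1/n : ℝ) = 1 := by
    simp [Finset.sum_const, Finset.card_univ]
    field_simp
  have amgm := Real.geom_mean_le_arith_mean_weighted Finset.univ (fun _ => 1/n)
    hherm.eigenvalues hw hw1 (fun i _ => hev i)
  have h1 : ∏ i, hherm.eigenvalues i ^ (1/n : ℝ) = (∏ i, hherm.eigenvalues i) ^ (1/n : ℝ) :=
    Real.finset_prod_rpow _ _ (fun i _ => hev i) _
  have h2 : ∑ i, (1/n : ℝ) * hherm.eigenvalues i = (∑ i, hherm.eigenvalues i) / n := by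
    rw [← Finset.mul_sum]; ring
  rw [h1, h2] at amgm
  have hP : (0:ℝ) ≤ ∏ i, hherm.eigenvalues i := Finset.prod_nonneg (fun i _ => hev i)
  have hS : (0:ℝ) ≤ (∑ i, hherm.eigenvalues i) / n := le_trans (Real.rpow_nonneg hP _) amgm
  calc ∏ i, hherm.eigenvalues i
      = ((∏ i, hherm.eigenvalues i) ^ (1/n : ℝ)) ^ (n : ℕ) := by
        rw [← Real.rpow_natCast ((∏ i, hherm.eigenvalues i) ^ (1/n : ℝ)) n,
          ← Real.rpow_mul hP]
        rw [one_div, inv_mul_cancel₀ (by exact_mod_cast hn.ne' : (n:ℝ) ≠ 0), Real.rpow_one]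
    _ ≤ ((∑ i, hherm.eigenvalues i) / n) ^ (n : ℕ) :=
        pow_le_pow_left₀ (Real.rpow_nonneg hP _) amgm n

lemma core {n K : ℕ} (hn : 0 < n) {ε C : ℝ} (hε : 0 < ε) (hC : 0 < C)
    (c w : Fin K → Fin n → ℝ)
    (hc : ∀ t i, |c t i| ≤ 1) (hw : ∀ k i, |w k i| ≤ C)
    (h1 : ∀ k : Fin K, ∑ t ∈ Finset.univ.filter (fun t : Fin K => (t:ℕ) < (k:ℕ)), (w k ⬝ᵥ c t)^2 ≤ ε^2)
    (h2 : ∀ k, ε ≤ |w k ⬝ᵥ c k|) :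
    (3/2:ℝ)^K ≤ (1 + K * n * C^2/ε^2)^n := by
  set L : ℝ := ε^2/(n*C^2) with hLdef
  have hL : 0 < L := by positivity
  set S : ℕ → Finset (Fin K) := fun m => Finset.univ.filter (fun t => (t:ℕ) < m) with hS
  set V : ℕ → Matrix (Fin n) (Fin n) ℝ :=
    fun m => L • (1 : Matrix (Fin n) (Fin n) ℝ) + ∑ t ∈ S m, vecMulVec (c t) (c t) with hV
  have hVpd : ∀ m, (V m).PosDef := fun m => posdef_V hL _ _
  -- step identity
  have hstep : ∀ m (hm : m < K),
      V (m + 1) = V m + vecMulVec (c ⟨m, hm⟩) (c ⟨m, hm⟩) := by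
    intro m hm
    have hins : S (m+1) = insert ⟨m, hm⟩ (S m) := by
      ext t
      simp only [hS, Finset.mem_filter, Finset.mem_univ, true_and, Finset.mem_insert]
      constructor
      · intro ht
        rcases Nat.lt_succ_iff_lt_or_eq.mp ht with h | h
        · right; exact h
        · left; exact Fin.ext h
      · rintro (h | h)
        · rw [h]; exact Nat.lt_succ_self m
        · exact Nat.lt_succ_of_lt h
    have hnotmem : (⟨m, hm⟩ : Fin K) ∉ S m := by
      simp [hS]
    rw [hV]
    simp only
    rw [hins, Finset.sum_insert hnotmem]
    abel
  -- lower bound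
  have hlow : ∀ m, m ≤ K → L^n * (3/2)^m ≤ (V m).det := by
    intro m
    induction m with
    | zero =>
      intro _
      have : S 0 = ∅ := by simp [hS]
      simp only [hV, this, Finset.sum_empty, add_zero, pow_zero, mul_one]
      rw [Matrix.det_smul, Matrix.det_one, mul_one]
      simp
    | succ m ih =>
      intro hm1
      have hm : m < K := hm1
      have ihm := ih (le_of_lt hm)
      set km : Fin K := ⟨m, hm⟩ with hkm
      have hq : (1:ℝ)/2 ≤ c km ⬝ᵥ ((V m)⁻¹ *ᵥ c km) := by
        have hcs := cs_pd (hVpd m) (w km) (c km)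
        have hwVw : w km ⬝ᵥ ((V m) *ᵥ w km) ≤ 2 * ε^2 := by
          have hqf := quadform_V L (S m) c (w km)
          rw [hV]; simp only; rw [hqf]
          have hb1 : L * (∑ i, (w km i)^2) ≤ ε^2 := by
            have : (∑ i, (w km i)^2) ≤ n * C^2 := by
              calc (∑ i, (w km i)^2) ≤ ∑ _i : Fin n, C^2 := by
                    apply Finset.sum_le_sum
                    intro i _
                    rw [← sq_abs]
                    exact pow_le_pow_left₀ (abs_nonneg _) (hw km i) 2
                _ = n * C^2 := by simp [Finset.sum_const, Finset.card_univ, nsmul_eq_mul]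
            calc L * (∑ i, (w km i)^2) ≤ L * (n * C^2) :=
                  mul_le_mul_of_nonneg_left this hL.le
              _ = ε^2 := by rw [hLdef]; field_simp
          have hb2 : ∑ t ∈ S m, (w km ⬝ᵥ c t)^2 ≤ ε^2 := by
            have := h1 km
            have hSm : Finset.univ.filter (fun t : Fin K => (t:ℕ) < (km:ℕ)) = S m := by
              rw [hS]
            rwa [hSm] at this
          linarith
        have hlhs : ε^2 ≤ (w km ⬝ᵥ c km)^2 := by
          calc ε^2 ≤ |w km ⬝ᵥ c km|^2 := pow_le_pow_left₀ hε.le (h2 km) 2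
            _ = (w km ⬝ᵥ c km)^2 := sq_abs _
        have hwVw0 : 0 < w km ⬝ᵥ ((V m) *ᵥ w km) := by
          rcases eq_or_ne (w km) 0 with h | h
          · exfalso
            have := h2 km
            rw [h] at this
            simp at this
            linarith
          · simpa using (hVpd m).dotProduct_mulVec_pos h
        nlinarith [hcs, hwVw, hlhs, hwVw0, sq_nonneg ε]
      have hdetstep : (V (m+1)).det = (V m).det * (1 + c km ⬝ᵥ ((V m)⁻¹ *ᵥ c km)) := by
        rw [hstep m hm]
        exact det_step (hVpd m) (c km)
      have hdetpos : 0 < (V m).det := (hVpd m).det_pos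
      calc L^n * (3/2)^(m+1) = (L^n * (3/2)^m) * (3/2) := by ring
        _ ≤ (V m).det * (3/2) := by
            apply mul_le_mul_of_nonneg_right ihm; norm_num
        _ ≤ (V m).det * (1 + c km ⬝ᵥ ((V m)⁻¹ *ᵥ c km)) := by
            apply mul_le_mul_of_nonneg_left _ hdetpos.le
            linarith
        _ = (V (m+1)).det := hdetstep.symm
  -- upper bound
  have hup : (V K).det ≤ (L + K)^n := by
    have htr : (V K).trace ≤ L * n + K * n := by
      rw [hV]; simp only; rw [trace_V]
      have : ∑ t ∈ S K, ∑ i, (c t i)^2 ≤ K * n := by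
        calc ∑ t ∈ S K, ∑ i, (c t i)^2 ≤ ∑ t ∈ S K, ∑ _i : Fin n, (1:ℝ) := by
              apply Finset.sum_le_sum; intro t _
              apply Finset.sum_le_sum; intro i _
              rw [← one_pow 2, ← sq_abs]
              exact pow_le_pow_left₀ (abs_nonneg _) (hc t i) 2
          _ ≤ K * n := by
              simp [Finset.sum_const, Finset.card_univ]
              calc ((S K).card : ℝ) * n ≤ K * n := by
                    apply mul_le_mul_of_nonneg_right _ (Nat.cast_nonneg n)
                    exact_mod_cast Finset.card_le_card (Finset.filter_subset _ _) |>.trans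
                      (by simp)
                _ = K * n := rfl
      linarith
    calc (V K).det ≤ ((V K).trace / n)^n := det_le_trace_pow hn (hVpd K).posSemidef
      _ ≤ (L + K)^n := by
          apply pow_le_pow_left₀
          · apply div_nonneg _ (Nat.cast_nonneg n)
            rw [hV]; simp only; rw [trace_V]
            have h0 : (0:ℝ) ≤ ∑ t ∈ S K, ∑ i, (c t i)^2 :=
              Finset.sum_nonneg fun t _ => Finset.sum_nonneg fun i _ => sq_nonneg _
            positivity
          · calc (V K).trace / n ≤ (L * n + K * n) / n := by gcongr
              _ = L + K := by
                  have hn' : (n:ℝ) ≠ 0 := by exact_mod_cast hn.ne'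
                  field_simp
  -- combine
  have hfinal := le_trans (hlow K le_rfl) hup
  have hLn : (0:ℝ) < L^n := pow_pos hL n
  have hmain : (3/2:ℝ)^K ≤ ((L+K)/L)^n := by
    rw [div_pow (L + (K:ℝ)) L n, le_div_iff₀ hLn]
    calc (3/2:ℝ)^K * L^n = L^n * (3/2)^K := mul_comm _ _
      _ ≤ (L+K)^n := hfinal
  have heq : ((L+K)/L)^n = (1 + K * n * C^2/ε^2)^n := by
    congr 1
    have hn' : (n:ℝ) ≠ 0 := by exact_mod_cast hn.ne'
    rw [hLdef]
    field_simp
  rw [heq] at hmain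
  exact hmain

/-- ℓ2 eluder dimension of bounded linear classes: if `x¹,…,x^K ∈ X`,
`θ¹,…,θ^K ∈ Θ` form an ε-independent sequence for the linear class with
`|⟨x,θ⟩| ≤ C` and `dim span X = d`, then `(3/2)^K ≤ (K d² C²/ε² + 1)^d`. -/
theorem eluder_linear {N : ℕ} (X Θ : Set (Fin N → ℝ)) (C ε : ℝ) (d K : ℕ)
    (hC : ∀ x ∈ X, ∀ θ ∈ Θ, |∑ i, x i * θ i| ≤ C)
    (hd : Module.finrank ℝ (Submodule.span ℝ X) = d)
    (hε : 0 < ε)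
    (x : Fin K → Fin N → ℝ) (θ : Fin K → Fin N → ℝ)
    (hxX : ∀ k, x k ∈ X) (hθΘ : ∀ k, θ k ∈ Θ)
    (h1 : ∀ k : Fin K, ∑ t ∈ Finset.univ.filter (· < k), (∑ i, θ k i * x t i) ^ 2 ≤ ε ^ 2)
    (h2 : ∀ k : Fin K, ε ≤ |∑ i, θ k i * x k i|) :
    (3 / 2 : ℝ) ^ K ≤ ((K : ℝ) * d ^ 2 * C ^ 2 / ε ^ 2 + 1) ^ d := by
  classical
  -- trivial case K = 0
  rcases Nat.eq_zero_or_pos K with hK0 | hK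
  · subst hK0
    simp
  have k₀ : Fin K := ⟨0, hK⟩
  -- ε ≤ C
  have hεC : ε ≤ C := by
    refine le_trans (h2 k₀) ?_
    have := hC (x k₀) (hxX k₀) (θ k₀) (hθΘ k₀)
    have hcomm : (∑ i, x k₀ i * θ k₀ i) = ∑ i, θ k₀ i * x k₀ i :=
      Finset.sum_congr rfl fun i _ => mul_comm _ _
    rwa [hcomm] at this
  have hC0 : 0 < C := lt_of_lt_of_le hε hεC
  -- the span of the x's
  set W := Submodule.span ℝ (Set.range x) with hW
  set n := Module.finrank ℝ W with hn
  have hnd : n ≤ d := by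
    rw [hn, ← hd]
    apply Submodule.finrank_mono
    apply Submodule.span_mono
    rw [Set.range_subset_iff]
    exact hxX
  -- case n = 0
  rcases Nat.eq_zero_or_pos n with hn0 | hnpos
  · exfalso
    have hWbot : W = ⊥ := by
      rw [← Submodule.finrank_eq_zero (R := ℝ) (S := W), ← hn, hn0]
    have hx0 : x k₀ = 0 := by
      have : x k₀ ∈ W := Submodule.subset_span (Set.mem_range_self k₀)
      rw [hWbot] at this
      simpa using this
    have := h2 k₀
    rw [hx0] at this
    simp at this
    linarith
  -- elements of W
  have hmemW : ∀ t, x t ∈ W := fun t => Submodule.subset_span (Set.mem_range_self t)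
  set X' : Fin K → W := fun t => ⟨x t, hmemW t⟩ with hX'
  -- a basis of W from among the x's
  obtain ⟨s, hsub, hspan, hli⟩ := exists_linearIndependent ℝ (Set.range x)
  have hsfin : s.Finite := hli.setFinite
  haveI : Fintype s := hsfin.fintype
  have hcard : Fintype.card s = n := by
    rw [hn, hW, ← hspan]
    rw [finrank_span_set_eq_card hli, Set.toFinset_card]
  have e : Fin n ≃ s := (Fintype.equivFinOfCardEq hcard).symm
  have hmemW' : ∀ j : Fin n, (e j : Fin N → ℝ) ∈ W := fun j =>
    Submodule.subset_span (hsub (e j).2)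
  set y : Fin n → W := fun j => ⟨(e j : Fin N → ℝ), hmemW' j⟩ with hy
  have hliy : LinearIndependent ℝ y := by
    have h1' : LinearIndependent ℝ (fun j : Fin n => ((e j : Fin N → ℝ))) :=
      hli.comp e e.injective
    apply LinearIndependent.of_comp W.subtype
    exact h1'
  haveI : Nonempty (Fin n) := ⟨⟨0, hnpos⟩⟩
  have hcard' : Fintype.card (Fin n) = Module.finrank ℝ W := by simp [hn]
  set bW := basisOfLinearIndependentOfCardEqFinrank hliy hcard' with hbW
  have hbWy : ⇑bW = y := coe_basisOfLinearIndependentOfCardEqFinrank hliy hcard'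
  set φ := bW.equivFun with hφ
  -- matrix of coordinates
  set A : (Fin n → Fin K) → Matrix (Fin n) (Fin n) ℝ :=
    fun σ => Matrix.of (fun i j => φ (X' (σ j)) i) with hA
  -- index choice realizing the basis
  have hσ₀ex : ∀ j : Fin n, ∃ t : Fin K, x t = (e j : Fin N → ℝ) := fun j => hsub (e j).2
  choose σ₀ hσ₀ using hσ₀ex
  have hAσ₀ : A σ₀ = 1 := by
    ext i j
    have hXy : X' (σ₀ j) = bW j := by
      rw [hbWy, hy]
      apply Subtype.ext
      simp [hX', hσ₀ j]
    rw [hA]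
    simp only [Matrix.of_apply, hXy, hφ, Module.Basis.equivFun_apply, Module.Basis.repr_self]
    rw [Finsupp.single_apply, Matrix.one_apply]
    simp [eq_comm]
  -- maximize |det|
  obtain ⟨σs, -, hmax⟩ := Finset.exists_max_image (Finset.univ : Finset (Fin n → Fin K))
    (fun σ => |(A σ).det|) ⟨σ₀, Finset.mem_univ _⟩
  set M := A σs with hM
  have hdet1 : 1 ≤ |M.det| := by
    have := hmax σ₀ (Finset.mem_univ _)
    rwa [hAσ₀, Matrix.det_one, abs_one] at this
  have hdetne : M.det ≠ 0 := by
    intro h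
    rw [h, abs_zero] at hdet1
    linarith
  -- coefficients
  set c : Fin K → Fin n → ℝ := fun t => (M.det)⁻¹ • Matrix.cramer M (φ (X' t)) with hc
  have hMc : ∀ t, M *ᵥ c t = φ (X' t) := by
    intro t
    rw [hc]
    simp only
    rw [Matrix.mulVec_smul, Matrix.mulVec_cramer, smul_smul, inv_mul_cancel₀ hdetne, one_smul]
  -- coefficient bound
  have hcb : ∀ t i, |c t i| ≤ 1 := by
    intro t i
    have hupd : M.updateCol i (φ (X' t)) = A (Function.update σs i t) := by
      ext i' j
      rw [Matrix.updateCol_apply, hA]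
      simp only [Matrix.of_apply, Function.update_apply]
      by_cases h : j = i <;> simp [h, hM, hA]
    have hle : |(M.updateCol i (φ (X' t))).det| ≤ |M.det| := by
      rw [hupd]
      exact hmax _ (Finset.mem_univ _)
    rw [hc]
    simp only [Pi.smul_apply, smul_eq_mul, abs_mul, abs_inv]
    rw [Matrix.cramer_apply]
    calc |M.det|⁻¹ * |(M.updateCol i (φ (X' t))).det| ≤ |M.det|⁻¹ * |M.det| := by
          apply mul_le_mul_of_nonneg_left hle (inv_nonneg.mpr (abs_nonneg _))
      _ = 1 := inv_mul_cancel₀ (by positivity)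
  -- reconstruction
  have hrecW : ∀ t, X' t = ∑ j, c t j • X' (σs j) := by
    intro t
    apply φ.injective
    rw [map_sum]
    funext i
    have : (∑ j, φ (c t j • X' (σs j))) i = ∑ j, c t j * φ (X' (σs j)) i := by
      rw [Finset.sum_apply]
      apply Finset.sum_congr rfl
      intro j _
      rw [_root_.map_smul]
      simp
    rw [this, ← hMc t]
    rw [Matrix.mulVec, dotProduct]
    apply Finset.sum_congr rfl
    intro j _
    rw [hM, hA]
    simp only [Matrix.of_apply]
    ring
  have hrec : ∀ t (i : Fin N), x t i = ∑ j, c t j * x (σs j) i := by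
    intro t i
    have := congrArg (Subtype.val) (hrecW t)
    have h2' : x t = ∑ j, c t j • x (σs j) := by
      rw [hX'] at this
      simpa using this
    rw [h2']
    simp [Finset.sum_apply]
  -- the reduced linear functional
  set w : Fin K → Fin n → ℝ := fun k j => ∑ i, θ k i * x (σs j) i with hw
  have hwb : ∀ k j, |w k j| ≤ C := by
    intro k j
    have := hC (x (σs j)) (hxX _) (θ k) (hθΘ k)
    have hcomm : (∑ i, x (σs j) i * θ k i) = ∑ i, θ k i * x (σs j) i :=
      Finset.sum_congr rfl fun i _ => mul_comm _ _
    rw [hw]; simp only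
    rwa [hcomm] at this
  -- key identity
  have hkey : ∀ k t, (∑ i, θ k i * x t i) = w k ⬝ᵥ c t := by
    intro k t
    rw [dotProduct]
    calc (∑ i, θ k i * x t i) = ∑ i, θ k i * ∑ j, c t j * x (σs j) i := by
          apply Finset.sum_congr rfl
          intro i _
          rw [hrec t i]
      _ = ∑ i, ∑ j, θ k i * (c t j * x (σs j) i) := by
          apply Finset.sum_congr rfl
          intro i _
          rw [Finset.mul_sum]
      _ = ∑ j, ∑ i, θ k i * (c t j * x (σs j) i) := Finset.sum_comm
      _ = ∑ j, w k j * c t j := by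
          apply Finset.sum_congr rfl
          intro j _
          rw [hw]
          simp only
          rw [Finset.sum_mul]
          apply Finset.sum_congr rfl
          intro i _
          ring
  -- apply the core lemma
  have hcore := core hnpos hε hC0 c w hcb hwb
    (fun k => by
      have := h1 k
      have hset : Finset.univ.filter (fun t : Fin K => (t:ℕ) < (k:ℕ))
          = Finset.univ.filter (· < k) := by
        apply Finset.filter_congr
        intro t _
        exact Fin.lt_def.symm
      rw [hset]
      calc ∑ t ∈ Finset.univ.filter (· < k), (w k ⬝ᵥ c t)^2
          = ∑ t ∈ Finset.univ.filter (· < k), (∑ i, θ k i * x t i)^2 := by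
            apply Finset.sum_congr rfl
            intro t _
            rw [hkey]
        _ ≤ ε^2 := this)
    (fun k => by rw [← hkey]; exact h2 k)
  -- conclude
  refine le_trans hcore ?_
  have hb1 : (0:ℝ) ≤ 1 + K * n * C^2/ε^2 := by positivity
  have hbb : (1:ℝ) + K * n * C^2/ε^2 ≤ K * d^2 * C^2/ε^2 + 1 := by
    have hnd2 : (n:ℝ) ≤ (d:ℝ)^2 := by
      have h1' : (n:ℝ) ≤ (d:ℝ) := by exact_mod_cast hnd
      have h2' : (d:ℝ) ≤ (d:ℝ)^2 := by
        have hd1 : (1:ℝ) ≤ (d:ℝ) := by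
          have : 1 ≤ d := le_trans hnpos hnd
          exact_mod_cast this
        nlinarith
      linarith
    have hmul : (K:ℝ) * n * C^2 ≤ K * d^2 * C^2 := by
      apply mul_le_mul_of_nonneg_right _ (sq_nonneg C)
      exact mul_le_mul_of_nonneg_left hnd2 (Nat.cast_nonneg K)
    have : (K:ℝ) * n * C^2/ε^2 ≤ K * d^2 * C^2/ε^2 := by
      apply div_le_div_of_nonneg_right hmul (by positivity)
    linarith
  calc (1 + K * n * C^2/ε^2)^n ≤ (K * d^2 * C^2/ε^2 + 1)^n :=
        pow_le_pow_left₀ hb1 hbb n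
    _ ≤ (K * d^2 * C^2/ε^2 + 1)^d := by
        apply pow_le_pow_right₀ _ hnd
        have h0 : (0:ℝ) ≤ K * d^2 * C^2/ε^2 := by positivity
        linarith
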